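/- For k ≥ 1 and d₁,…,d_k ≥ 1, the tensor rank of W_{d₁} ⊗ ⋯ ⊗ W_{d_k} in (ℂ²)^{⊗(d₁+⋯+d_k)} is at least d₁ + ⋯ + d_k − k + 1. -/

import Mathlib

open scoped TensorProduct
open PiTensorProduct

/-- Tensor rank of an element of `(ℂ²)^{⊗ι}`: the minimal number of decomposable
tensors summing to it. -/
noncomputable def tRank {ι : Type*} (T : ⨂[ℂ] (_ : ι), (ℂ × ℂ)) : ℕ :=
  sInf {r : ℕ | ∃ v : Fin r → ι → ℂ × ℂ, T = ∑ a : Fin r, tprod ℂ (v a)}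

/-- `W_{d 0} ⊗ ⋯ ⊗ W_{d (k-1)}` as an element of `(ℂ²)^{⊗(d 0 + ⋯ + d (k-1))}`,
with the tensor factors indexed by `Σ j, Fin (d j)` and `x = (1,0)`, `y = (0,1)`:
expanding each `W_{d j} = ∑_{q} x ⊗ ⋯ ⊗ y ⊗ ⋯ ⊗ x` (with `y` in position `q`),
the product is the sum over all choices `p j` of the position of `y` in the
`j`-th group. -/
noncomputable def Wprod (k : ℕ) (d : Fin k → ℕ) :
    ⨂[ℂ] (_ : Σ j : Fin k, Fin (d j)), (ℂ × ℂ) :=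
  ∑ p : (Π j : Fin k, Fin (d j)), tprod ℂ (fun i =>
    if i.2 = p i.1 then ((0, 1) : ℂ × ℂ) else (1, 0))

namespace Stmt16Aux

/-! ### Generic splitting lemmas -/

lemma prod_split {ι : Type} [Fintype ι] [DecidableEq ι] {M : Type*} [CommMonoid M]
    (i₀ : ι) (F : ι → M) :
    ∏ i, F i = F i₀ * ∏ i : {i // i ≠ i₀}, F i.1 := by
  rw [← Finset.mul_prod_erase Finset.univ F (Finset.mem_univ i₀)]
  congr 1
  exact Finset.prod_subtype (p := fun x => x ≠ i₀) (Finset.univ.erase i₀) (by simp) F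

lemma sum_split {ι : Type} [Fintype ι] [DecidableEq ι] {M : Type*} [AddCommMonoid M]
    (i₀ : ι) (F : ι → M) :
    ∑ i, F i = F i₀ + ∑ i : {i // i ≠ i₀}, F i.1 := by
  rw [← Finset.add_sum_erase Finset.univ F (Finset.mem_univ i₀)]
  congr 1
  exact Finset.sum_subtype (p := fun x => x ≠ i₀) (Finset.univ.erase i₀) (by simp) F

/-! ### The coefficient functions -/

noncomputable def cc (γ : ℂ) (m : ℕ) : ℂ :=
  (if m = 1 then 1 else 0) + γ * (if m = 0 then 1 else 0)

def cnt {ι κ : Type} [Fintype ι] [DecidableEq κ] (g : ι → κ) (j : κ) (f : ι → Bool) : ℕ :=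
  ∑ i, if g i = j ∧ f i = true then 1 else 0

lemma cc_one (γ : ℂ) : cc γ 1 = 1 := by simp [cc]

lemma cc_step (δ γ' : ℂ) (m : ℕ) : cc δ m + γ' * cc δ (1 + m) = cc (δ + γ') m := by
  rcases m with _ | p <;> simp [cc] <;> ring

lemma cnt_section {ι κ : Type} [Fintype ι] [DecidableEq ι] [DecidableEq κ]
    (g : ι → κ) (rep : κ → ι) (hrep : ∀ j, g (rep j) = j) (j : κ) :
    cnt g j (fun i => decide (i = rep (g i))) = 1 := by
  unfold cnt
  have h : ∀ i : ι, (g i = j ∧ (decide (i = rep (g i)) = true)) ↔ i = rep j := by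
    intro i
    simp only [decide_eq_true_eq]
    constructor
    · rintro ⟨h1, h2⟩; rw [h2, h1]
    · rintro rfl; exact ⟨hrep j, by rw [hrep j]⟩
  rw [Finset.sum_congr rfl (fun i _ => if_congr (h i) rfl rfl)]
  simp

/-! ### The key substitution-method lower bound -/

lemma key (n : ℕ) : ∀ (ι κ A : Type) [Fintype ι] [DecidableEq ι] [Fintype κ] [DecidableEq κ]
    [Fintype A] [DecidableEq A] (g : ι → κ), Function.Surjective g →
    Fintype.card ι = n + Fintype.card κ →
    ∀ (γ : κ → ℂ) (s : A → ℂ) (w : A → ι → Bool → ℂ),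
    (∀ f : ι → Bool, ∏ j, cc (γ j) (cnt g j f) = ∑ a, s a * ∏ i, w a i (f i)) →
    n + 1 ≤ Fintype.card A := by
  induction n with
  | zero =>
    intro ι κ A _ _ _ _ _ _ g hg hcard γ s w hrep
    by_contra hA
    have hA0 : Fintype.card A = 0 := by omega
    have hAe : IsEmpty A := Fintype.card_eq_zero_iff.mp hA0
    set rep : κ → ι := fun j => Classical.choose (hg j) with hrepdef
    have hsec : ∀ j, g (rep j) = j := fun j => Classical.choose_spec (hg j)
    have h1 := hrep (fun i => decide (i = rep (g i)))
    rw [Finset.prod_congr rfl (fun j _ => by rw [cnt_section g rep hsec j, cc_one])] at h1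
    simp only [Finset.prod_const_one, Finset.univ_eq_empty, Finset.sum_empty] at h1
    exact one_ne_zero h1
  | succ n IH =>
    intro ι κ A _ _ _ _ _ _ g hg hcard γ s w hrep
    classical
    -- find a fiber with two elements
    have hex : ∃ i₀ i₁ : ι, i₀ ≠ i₁ ∧ g i₀ = g i₁ := by
      by_contra hc
      push_neg at hc
      have hinj : Function.Injective g := by
        intro a b hab
        by_contra hne
        exact hc a b hne hab
      have := Fintype.card_le_of_injective g hinj
      omega
    obtain ⟨i₀, i₁, hne, hgeq⟩ := hex
    set j₀ := g i₀ with hj₀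
    -- a section through i₀
    have hrepc : ∃ rep : κ → ι, (∀ j, g (rep j) = j) ∧ rep j₀ = i₀ := by
      refine ⟨fun j => if h : j = j₀ then i₀ else Classical.choose (hg j), fun j => ?_, by simp⟩
      by_cases h : j = j₀
      · simp [h, hj₀]
      · simp [h, Classical.choose_spec (hg j)]
    obtain ⟨rep, hsec, hrep0⟩ := hrepc
    set fstar : ι → Bool := fun i => decide (i = rep (g i)) with hfstar
    have h1 := hrep fstar
    rw [Finset.prod_congr rfl (fun j _ => by rw [hfstar, cnt_section g rep hsec j, cc_one]),
      Finset.prod_const_one] at h1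
    -- find a term using i₀'s `true` slot
    have hex_a : ∃ a : A, w a i₀ true ≠ 0 := by
      by_contra hc
      push_neg at hc
      have hz : ∀ a : A, ∏ i, w a i (fstar i) = 0 := by
        intro a
        apply Finset.prod_eq_zero (Finset.mem_univ i₀)
        have hfi : fstar i₀ = true := by
          simp only [hfstar, ← hj₀, hrep0, decide_eq_true_eq]
        rw [hfi]
        exact hc a
      rw [Finset.sum_congr rfl (fun a _ => by rw [hz a, mul_zero])] at h1
      simp at h1
    obtain ⟨astar, hβ⟩ := hex_a
    set γ' : ℂ := -(w astar i₀ false) / (w astar i₀ true) with hγ'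
    -- the reduced data
    have hg' : Function.Surjective (fun i : {i : ι // i ≠ i₀} => g i.1) := by
      intro j
      obtain ⟨i, hi⟩ := hg j
      by_cases h : i = i₀
      · refine ⟨⟨i₁, fun hh => hne hh.symm⟩, ?_⟩
        subst h
        simpa [← hgeq] using hi
      · exact ⟨⟨i, h⟩, hi⟩
    have hcard' : Fintype.card {i : ι // i ≠ i₀} = n + Fintype.card κ := by
      have h2 : Fintype.card {i : ι // i ≠ i₀} = Fintype.card ι - 1 := by
        have := Fintype.card_subtype_compl (fun i : ι => i = i₀)
        simpa [Fintype.card_subtype_eq] using this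
      omega
    set γ'' : κ → ℂ := fun j => if j = j₀ then γ j + γ' else γ j with hγ''
    set s' : {a : A // a ≠ astar} → ℂ :=
      fun a => s a.1 * (w a.1 i₀ false + γ' * w a.1 i₀ true) with hs'
    set w' : {a : A // a ≠ astar} → {i : ι // i ≠ i₀} → Bool → ℂ :=
      fun a i b => w a.1 i.1 b with hw'
    have hrep' : ∀ f' : {i : ι // i ≠ i₀} → Bool,
        ∏ j, cc (γ'' j) (cnt (fun i : {i : ι // i ≠ i₀} => g i.1) j f') =
          ∑ a, s' a * ∏ i, w' a i (f' i) := by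
      intro f'
      set f₀ : ι → Bool := fun i => if h : i = i₀ then false else f' ⟨i, h⟩ with hf₀
      set f₁ : ι → Bool := fun i => if h : i = i₀ then true else f' ⟨i, h⟩ with hf₁
      have hoff0 : ∀ (i : ι) (h : i ≠ i₀), f₀ i = f' ⟨i, h⟩ := fun i h => by simp [hf₀, h]
      have hoff1 : ∀ (i : ι) (h : i ≠ i₀), f₁ i = f' ⟨i, h⟩ := fun i h => by simp [hf₁, h]
      have hcntb : ∀ (j : κ) (b : Bool) (fb : ι → Bool), fb i₀ = b →
          (∀ (i : ι) (h : i ≠ i₀), fb i = f' ⟨i, h⟩) →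
          cnt g j fb = (if g i₀ = j ∧ b = true then 1 else 0) +
            cnt (fun i : {i : ι // i ≠ i₀} => g i.1) j f' := by
        intro j b fb hb hoff
        unfold cnt
        rw [sum_split i₀ (fun i => if g i = j ∧ fb i = true then 1 else 0)]
        congr 1
        · rw [hb]
        · exact Finset.sum_congr rfl fun i _ => by rw [hoff i.1 i.2]
      have hcnt0 : ∀ j, cnt g j f₀ = cnt (fun i : {i : ι // i ≠ i₀} => g i.1) j f' := by
        intro j
        rw [hcntb j false f₀ (by simp [hf₀]) hoff0]
        simp
      have hcnt1j : cnt g j₀ f₁ = 1 + cnt (fun i : {i : ι // i ≠ i₀} => g i.1) j₀ f' := by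
        rw [hcntb j₀ true f₁ (by simp [hf₁]) hoff1]
        simp [← hj₀]
      have hcnt1 : ∀ j, j ≠ j₀ → cnt g j f₁ =
          cnt (fun i : {i : ι // i ≠ i₀} => g i.1) j f' := by
        intro j hj
        rw [hcntb j true f₁ (by simp [hf₁]) hoff1]
        have : ¬(g i₀ = j) := by rw [← hj₀]; exact fun hh => hj hh.symm
        simp [this]
      -- left-hand side identity
      have hLHS : ∏ j, cc (γ'' j) (cnt (fun i : {i : ι // i ≠ i₀} => g i.1) j f') =
          (∏ j, cc (γ j) (cnt g j f₀)) + γ' * ∏ j, cc (γ j) (cnt g j f₁) := by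
        rw [prod_split j₀ (fun j => cc (γ'' j) (cnt (fun i : {i : ι // i ≠ i₀} => g i.1) j f')),
          prod_split j₀ (fun j => cc (γ j) (cnt g j f₀)),
          prod_split j₀ (fun j => cc (γ j) (cnt g j f₁))]
        have hP0 : ∏ j : {j : κ // j ≠ j₀},
            cc (γ j.1) (cnt g j.1 f₀) =
            ∏ j : {j : κ // j ≠ j₀},
              cc (γ'' j.1) (cnt (fun i : {i : ι // i ≠ i₀} => g i.1) j.1 f') := by
          refine Finset.prod_congr rfl fun j _ => ?_
          rw [hcnt0 j.1, hγ'']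
          simp [j.2]
        have hP1 : ∏ j : {j : κ // j ≠ j₀},
            cc (γ j.1) (cnt g j.1 f₁) =
            ∏ j : {j : κ // j ≠ j₀},
              cc (γ'' j.1) (cnt (fun i : {i : ι // i ≠ i₀} => g i.1) j.1 f') := by
          refine Finset.prod_congr rfl fun j _ => ?_
          rw [hcnt1 j.1 j.2, hγ'']
          simp [j.2]
        rw [hP0, hP1, hcnt0 j₀, hcnt1j]
        have hγ''j₀ : γ'' j₀ = γ j₀ + γ' := by simp [hγ'']
        rw [hγ''j₀, ← cc_step]
        ring
      -- right-hand side identities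
      have hRb : ∀ (b : Bool) (fb : ι → Bool), fb i₀ = b →
          (∀ (i : ι) (h : i ≠ i₀), fb i = f' ⟨i, h⟩) →
          ∑ a : A, s a * ∏ i, w a i (fb i) =
            ∑ a : A, s a * (w a i₀ b * ∏ i : {i : ι // i ≠ i₀}, w a i.1 (f' i)) := by
        intro b fb hb hoff
        refine Finset.sum_congr rfl fun a _ => ?_
        rw [prod_split i₀ (fun i => w a i (fb i)), hb]
        congr 2
        exact Finset.prod_congr rfl fun i _ => by rw [hoff i.1 i.2]
      have e0 := hrep f₀
      rw [hRb false f₀ (by simp [hf₀]) hoff0] at e0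
      have e1 := hrep f₁
      rw [hRb true f₁ (by simp [hf₁]) hoff1] at e1
      calc ∏ j, cc (γ'' j) (cnt (fun i : {i : ι // i ≠ i₀} => g i.1) j f')
          = (∏ j, cc (γ j) (cnt g j f₀)) + γ' * ∏ j, cc (γ j) (cnt g j f₁) := hLHS
        _ = (∑ a : A, s a * (w a i₀ false * ∏ i : {i : ι // i ≠ i₀}, w a i.1 (f' i))) +
            γ' * ∑ a : A, s a * (w a i₀ true * ∏ i : {i : ι // i ≠ i₀}, w a i.1 (f' i)) := by
            rw [e0, e1]
        _ = ∑ a : A, (s a * (w a i₀ false + γ' * w a i₀ true)) *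
              ∏ i : {i : ι // i ≠ i₀}, w a i.1 (f' i) := by
            rw [Finset.mul_sum, ← Finset.sum_add_distrib]
            exact Finset.sum_congr rfl fun a _ => by ring
        _ = ∑ a, s' a * ∏ i, w' a i (f' i) := by
            rw [sum_split astar (fun a => (s a * (w a i₀ false + γ' * w a i₀ true)) *
              ∏ i : {i : ι // i ≠ i₀}, w a i.1 (f' i))]
            have hz : w astar i₀ false + γ' * w astar i₀ true = 0 := by
              rw [hγ', div_mul_cancel₀ _ hβ]
              ring
            rw [hz, mul_zero, zero_mul, zero_add]
    have hfin := IH {i : ι // i ≠ i₀} κ {a : A // a ≠ astar}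
      (fun i => g i.1) hg' hcard' γ'' s' w' hrep'
    have hA' : Fintype.card {a : A // a ≠ astar} = Fintype.card A - 1 := by
      have := Fintype.card_subtype_compl (fun a : A => a = astar)
      simpa [Fintype.card_subtype_eq] using this
    have hA1 : 1 ≤ Fintype.card A := Fintype.card_pos_iff.mpr ⟨astar⟩
    omega

/-! ### The coefficient functional on the tensor space -/

noncomputable def phi {ι : Type} [Fintype ι] (f : ι → Bool) :
    (⨂[ℂ] (_ : ι), (ℂ × ℂ)) →ₗ[ℂ] ℂ :=
  PiTensorProduct.lift ((MultilinearMap.mkPiAlgebra ℂ ι ℂ).compLinearMap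
    (fun i => if f i then LinearMap.snd ℂ ℂ ℂ else LinearMap.fst ℂ ℂ ℂ))

lemma phi_tprod {ι : Type} [Fintype ι] (f : ι → Bool) (v : ι → ℂ × ℂ) :
    phi f (tprod ℂ v) = ∏ i, (if f i then (v i).2 else (v i).1) := by
  simp only [phi, PiTensorProduct.lift.tprod, MultilinearMap.compLinearMap_apply,
    MultilinearMap.mkPiAlgebra_apply]
  refine Finset.prod_congr rfl fun i _ => ?_
  by_cases h : f i <;> simp [h]

lemma group_sum {τ : Type} [Fintype τ] [DecidableEq τ] (h : τ → Bool) :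
    ∑ q : τ, ∏ t : τ, (if h t = decide (t = q) then (1 : ℂ) else 0) =
      cc 0 (∑ t, if h t = true then 1 else 0) := by
  classical
  set S : Finset τ := Finset.univ.filter (fun t => h t = true) with hS
  have hm : (∑ t, if h t = true then 1 else 0) = S.card := by
    simp [hS]
  have hterm : ∀ q : τ, (∏ t : τ, (if h t = decide (t = q) then (1 : ℂ) else 0)) =
      if S = {q} then 1 else 0 := by
    intro q
    by_cases hq : S = {q}
    · have hall : ∀ t, h t = decide (t = q) := by
        intro t
        have hmem : h t = true ↔ t = q := by
          constructor
          · intro ht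
            have : t ∈ S := by simp [hS, ht]
            rw [hq] at this
            simpa using this
          · rintro rfl
            have : t ∈ S := hq ▸ Finset.mem_singleton_self t
            simpa [hS] using this
        cases hht : h t with
        | true => simp [hmem.mp hht]
        | false =>
          have : ¬(t = q) := fun hh => by simp [hmem.mpr hh] at hht
          simp [this]
      simp [hall, hq]
    · have hex : ∃ t, ¬(h t = decide (t = q)) := by
        by_contra hc
        push_neg at hc
        apply hq
        ext t
        simp [hS, hc t]
      obtain ⟨t₀, ht₀⟩ := hex
      rw [Finset.prod_eq_zero (Finset.mem_univ t₀) (by simp [ht₀]), if_neg hq]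
  rw [Finset.sum_congr rfl fun q _ => hterm q, hm]
  by_cases hc : S.card = 1
  · obtain ⟨a, ha⟩ := Finset.card_eq_one.mp hc
    have hiff : ∀ q : τ, (S = {q}) ↔ (q = a) := by
      intro q
      constructor
      · intro hh
        rw [ha] at hh
        exact (Finset.singleton_injective hh).symm
      · rintro rfl; exact ha
    rw [Finset.sum_congr rfl fun q _ => if_congr (hiff q) rfl rfl]
    simp [hc, cc]
  · have hno : ∀ q : τ, ¬(S = {q}) := by
      intro q hh
      rw [hh] at hc
      simp at hc
    simp [hno, hc, cc]

lemma cnt_sigma {k : ℕ} (d : Fin k → ℕ) (j : Fin k) (f : (Σ j : Fin k, Fin (d j)) → Bool) :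
    cnt Sigma.fst j f = ∑ t : Fin (d j), if f ⟨j, t⟩ = true then 1 else 0 := by
  unfold cnt
  rw [← Finset.univ_sigma_univ, Finset.sum_sigma]
  rw [Finset.sum_eq_single j]
  · simp
  · intro j' _ hj'
    apply Finset.sum_eq_zero
    intro t _
    simp [hj']
  · intro hj
    simp at hj

lemma phi_w {k : ℕ} (d : Fin k → ℕ) (f : (Σ j : Fin k, Fin (d j)) → Bool) :
    phi f (Wprod k d) = ∏ j, cc 0 (cnt Sigma.fst j f) := by
  classical
  rw [Wprod, map_sum]
  have h1 : ∀ p : (Π j : Fin k, Fin (d j)),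
      phi f (tprod ℂ (fun i : Σ j : Fin k, Fin (d j) =>
        if i.2 = p i.1 then ((0, 1) : ℂ × ℂ) else (1, 0))) =
      ∏ j, ∏ t : Fin (d j), (if f ⟨j, t⟩ = decide (t = p j) then (1 : ℂ) else 0) := by
    intro p
    rw [phi_tprod]
    rw [← Finset.univ_sigma_univ, Finset.prod_sigma]
    refine Finset.prod_congr rfl fun j _ => Finset.prod_congr rfl fun t _ => ?_
    cases hft : f ⟨j, t⟩ <;> by_cases hts : t = p j <;> simp [hft, hts]
  have h2 : ∏ j, cc 0 (cnt Sigma.fst j f) =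
      ∏ j, ∑ q : Fin (d j), ∏ t : Fin (d j), (if f ⟨j, t⟩ = decide (t = q) then (1 : ℂ) else 0) := by
    refine Finset.prod_congr rfl fun j _ => ?_
    rw [group_sum, cnt_sigma]
  rw [Finset.sum_congr rfl fun p _ => h1 p, h2, Fintype.prod_sum]

end Stmt16Aux

open Stmt16Aux in
theorem stmt16 (k : ℕ) (hk : 1 ≤ k) (d : Fin k → ℕ) (hd : ∀ j, 1 ≤ d j) :
    (∑ j, d j) - k + 1 ≤ tRank (Wprod k d) := by
  classical
  have hksum : k ≤ ∑ j, d j := by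
    calc k = ∑ _j : Fin k, 1 := by simp
      _ ≤ ∑ j, d j := Finset.sum_le_sum fun j _ => hd j
  apply le_csInf
  · -- the set of ranks is nonempty
    refine ⟨Fintype.card (Π j : Fin k, Fin (d j)), ?_⟩
    set e := (Fintype.equivFin (Π j : Fin k, Fin (d j))).symm with he
    refine ⟨fun a => fun i => if i.2 = e a i.1 then ((0, 1) : ℂ × ℂ) else (1, 0), ?_⟩
    rw [Wprod]
    exact (Equiv.sum_comp e fun p => tprod ℂ (fun i : Σ j : Fin k, Fin (d j) =>
      if i.2 = p i.1 then ((0, 1) : ℂ × ℂ) else (1, 0))).symm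
  · rintro r ⟨v, hv⟩
    have hrep : ∀ f : (Σ j : Fin k, Fin (d j)) → Bool,
        ∏ j, cc ((fun _ : Fin k => (0 : ℂ)) j) (cnt Sigma.fst j f) =
          ∑ a : Fin r, (fun _ : Fin r => (1 : ℂ)) a *
            ∏ i, (fun (a : Fin r) (i : Σ j : Fin k, Fin (d j)) (b : Bool) =>
              if b then (v a i).2 else (v a i).1) a i (f i) := by
      intro f
      have hphi := congrArg (phi f) hv
      rw [phi_w] at hphi
      rw [hphi, map_sum]
      refine Finset.sum_congr rfl fun a _ => ?_
      rw [one_mul, phi_tprod]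
    have hkey := key ((∑ j, d j) - k) (Σ j : Fin k, Fin (d j)) (Fin k) (Fin r)
      Sigma.fst (fun j => ⟨⟨j, ⟨0, hd j⟩⟩, rfl⟩) (by
        rw [Fintype.card_sigma]
        simp only [Fintype.card_fin]
        omega)
      (fun _ => 0) (fun _ => 1)
      (fun (a : Fin r) (i : Σ j : Fin k, Fin (d j)) (b : Bool) =>
        if b then (v a i).2 else (v a i).1) hrep
    simpa using hkey
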